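/- Let 𝒢=(G,w) be a pruned positive-weighted graph with V(G)={1,...,n}, and write D_{i,j}=D_{i,j}(𝒢). Then G contains a subgraph that is a subdivision of K_{3,3} if and only if there exist disjoint 3-element subsets A,B of [n] such that for any a ∈ A and b ∈ B, either D_{a,b} is indecomposable, or there exists a sequence (x₁,...,x_r) of vertices in [n]∖(A∪B) (depending on {a,b}) such that D_{a,x₁}, D_{x₁,x₂}, ..., D_{x_r,b} are all indecomposable, and such that for distinct pairs {a,b} ≠ {a',b'} (with a,a' ∈ A, b,b' ∈ B) the corresponding sequences do not intersect. -/

import Mathlib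

open SimpleGraph

variable {V : Type*}

/-- weight of a walk: sum of the weights of its edges -/
noncomputable def walkWeight (G : SimpleGraph V) (w : Sym2 V → ℝ) {i j : V} (p : G.Walk i j) : ℝ :=
  (p.edges.map w).sum

/-- the 2-weight: min over paths joining i and j -/
noncomputable def wdist (G : SimpleGraph V) (w : Sym2 V → ℝ) (i j : V) : ℝ :=
  sInf {x : ℝ | ∃ p : G.Walk i j, p.IsPath ∧ walkWeight G w p = x}

def Realizes (G : SimpleGraph V) (w : Sym2 V → ℝ) {i j : V} (p : G.Walk i j) : Prop :=
  p.IsPath ∧ walkWeight G w p = wdist G w i j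

def UsefulEdge (G : SimpleGraph V) (w : Sym2 V → ℝ) (e : Sym2 V) : Prop :=
  ∃ a b : V, a ≠ b ∧ ∀ p : G.Walk a b, Realizes G w p → e ∈ p.edges

def Pruned (G : SimpleGraph V) (w : Sym2 V → ℝ) : Prop :=
  ∀ e ∈ G.edgeSet, UsefulEdge G w e

def PosWeights (G : SimpleGraph V) (w : Sym2 V → ℝ) : Prop :=
  ∀ e ∈ G.edgeSet, 0 < w e

def Indec (G : SimpleGraph V) (w : Sym2 V → ℝ) (i j : V) : Prop :=
  ∀ z : V, z ≠ i → z ≠ j → wdist G w i j < wdist G w i z + wdist G w z j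

def IsLeaf (G : SimpleGraph V) (v : V) : Prop := (G.neighborSet v).ncard = 1

def IsSnake (G : SimpleGraph V) : Prop :=
  G.IsTree ∧ {v : V | IsLeaf G v}.ncard = 2

def IsCaterpillar (G : SimpleGraph V) : Prop :=
  G.IsTree ∧ ∃ (x₁ x₂ : V) (p : G.Walk x₁ x₂), p.IsPath ∧
    {v : V | v ∈ p.support} = {v : V | 2 ≤ (G.neighborSet v).ncard}

def IsPolygon {n : ℕ} [NeZero n] (G : SimpleGraph (Fin n)) : Prop :=
  ∃ σ : Equiv.Perm (Fin n), G.edgeSet = Set.range (fun i : Fin n => s(σ i, σ (i + 1)))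

noncomputable def tmin (G : SimpleGraph V) (w : Sym2 V → ℝ) (x : V) : ℝ :=
  (1 / 2) * sInf {r : ℝ | ∃ y z : V, y ≠ x ∧ z ≠ x ∧ y ≠ z ∧
    r = wdist G w x y + wdist G w x z - wdist G w y z}

def IsBipartiteOn (G : SimpleGraph V) (X Y : Set V) : Prop :=
  X ∩ Y = ∅ ∧ X ∪ Y = Set.univ ∧ ∀ a b : V, G.Adj a b → (a ∈ X ∧ b ∈ Y) ∨ (a ∈ Y ∧ b ∈ X)

noncomputable def chainSum {α : Type*} (D : α → α → ℝ) : List α → ℝ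
  | [] => 0
  | [_] => 0
  | a :: b :: l => D a b + chainSum D (b :: l)

def FIndec {n : ℕ} (D : Fin n → Fin n → ℝ) (i j : Fin n) : Prop :=
  ∀ z : Fin n, z ≠ i → z ≠ j → D i j < D i z + D z j

def TriangleIneq {n : ℕ} (D : Fin n → Fin n → ℝ) : Prop :=
  ∀ i j k : Fin n, i ≠ j → j ≠ k → i ≠ k → D i j ≤ D i k + D k j

def MaxTwice (x y z : ℝ) : Prop :=
  (x = y ∧ z ≤ x) ∨ (x = z ∧ y ≤ x) ∨ (y = z ∧ x ≤ y)

def FourPoint {n : ℕ} (D : Fin n → Fin n → ℝ) : Prop :=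
  ∀ i j k h : Fin n, i ≠ j → i ≠ k → i ≠ h → j ≠ k → j ≠ h → k ≠ h →
    MaxTwice (D i j + D k h) (D i k + D j h) (D i h + D k j)

def MedianFamily {n : ℕ} (D : Fin n → Fin n → ℝ) : Prop :=
  ∀ a b c : Fin n, ∃! m : Fin n,
    ∀ i ∈ ({a, b, c} : Set (Fin n)), ∀ j ∈ ({a, b, c} : Set (Fin n)), i ≠ j →
      D i j = D i m + D j m

noncomputable def tminF {n : ℕ} (D : Fin n → Fin n → ℝ) (x : Fin n) : ℝ :=
  (1 / 2) * sInf {r : ℝ | ∃ y z : Fin n, y ≠ x ∧ z ≠ x ∧ y ≠ z ∧ r = D x y + D x z - D y z}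

def interiorSet {G : SimpleGraph V} {u v : V} (p : G.Walk u v) : Set V :=
  {x : V | x ∈ p.support ∧ x ≠ u ∧ x ≠ v}

/-- `G` contains a subgraph that is a subdivision of `K₃,₃`: there are two disjoint triples of
branch vertices and a system of pairwise internally disjoint paths joining each vertex of one
triple to each vertex of the other, whose interior vertices avoid the branch vertices. -/
def ContainsSubdivisionK33 (G : SimpleGraph V) : Prop :=
  ∃ f g : Fin 3 → V, Function.Injective f ∧ Function.Injective g ∧
    (∀ a b : Fin 3, f a ≠ g b) ∧
    ∃ P : ∀ a b : Fin 3, G.Walk (f a) (g b),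
      (∀ a b : Fin 3, (P a b).IsPath) ∧
      (∀ a b : Fin 3, ∀ x ∈ interiorSet (P a b), x ∉ Set.range f ∪ Set.range g) ∧
      (∀ a b a' b' : Fin 3, (a ≠ a' ∨ b ≠ b') →
        ∀ x ∈ interiorSet (P a b), x ∉ (P a' b').support)

set_option linter.unusedSectionVars false

section Basics
variable [Fintype V] [DecidableEq V] {G : SimpleGraph V} [DecidableRel G.Adj] {w : Sym2 V → ℝ}

lemma weight_nonneg (hw : PosWeights G w) {i j : V} (p : G.Walk i j) :
    0 ≤ walkWeight G w p := by
  apply List.sum_nonneg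
  intro x hx
  simp only [List.mem_map] at hx
  obtain ⟨e, he, rfl⟩ := hx
  exact (hw e (p.edges_subset_edgeSet he)).le

lemma weight_append {i j k : V} (p : G.Walk i j) (q : G.Walk j k) :
    walkWeight G w (p.append q) = walkWeight G w p + walkWeight G w q := by
  simp [walkWeight, Walk.edges_append]

lemma weight_reverse {i j : V} (p : G.Walk i j) :
    walkWeight G w p.reverse = walkWeight G w p := by
  simp [walkWeight, Walk.edges_reverse, List.sum_reverse]

def wS (G : SimpleGraph V) (w : Sym2 V → ℝ) (i j : V) : Set ℝ :=
  {x : ℝ | ∃ p : G.Walk i j, p.IsPath ∧ walkWeight G w p = x}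

lemma wS_finite (i j : V) : (wS G w i j).Finite := by
  have : wS G w i j = Set.range (fun p : G.Path i j => walkWeight G w p.1) := by
    ext x
    constructor
    · rintro ⟨p, hp, rfl⟩; exact ⟨⟨p, hp⟩, rfl⟩
    · rintro ⟨p, rfl⟩; exact ⟨p.1, p.2, rfl⟩
  rw [this]
  exact Set.finite_range _

lemma wS_nonempty {i j : V} (h : G.Reachable i j) : (wS G w i j).Nonempty := by
  obtain ⟨p⟩ := h
  exact ⟨walkWeight G w p.bypass, p.bypass, p.bypass_isPath, rfl⟩

lemma exists_realizes {i j : V} (h : G.Reachable i j) :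
    ∃ p : G.Walk i j, Realizes G w p := by
  have h := (wS_nonempty (w := w) h).csInf_mem (wS_finite i j)
  obtain ⟨p, hp, hpe⟩ := h
  exact ⟨p, hp, hpe⟩

lemma wdist_le_path {i j : V} (p : G.Walk i j) (hp : p.IsPath) :
    wdist G w i j ≤ walkWeight G w p := by
  apply csInf_le
  · exact (wS_finite (G := G) (w := w) i j).bddBelow
  · exact ⟨p, hp, rfl⟩

lemma wdist_nonneg (hw : PosWeights G w) {i j : V} (h : G.Reachable i j) :
    0 ≤ wdist G w i j := by
  obtain ⟨p, hp, hpe⟩ := exists_realizes (w := w) h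
  rw [← hpe]; exact weight_nonneg hw p

lemma weight_pos (hw : PosWeights G w) {i j : V} (hij : i ≠ j) (p : G.Walk i j) :
    0 < walkWeight G w p := by
  cases p with
  | nil => exact absurd rfl hij
  | cons h q =>
    have h1 : 0 < w s(i, _) := hw _ h
    have h2 : 0 ≤ walkWeight G w q := weight_nonneg hw q
    simp only [walkWeight, Walk.edges_cons, List.map_cons, List.sum_cons]
    exact add_pos_of_pos_of_nonneg h1 h2

lemma wdist_pos (hw : PosWeights G w) {i j : V} (h : G.Reachable i j) (hij : i ≠ j) :
    0 < wdist G w i j := by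
  obtain ⟨p, hp, hpe⟩ := exists_realizes (w := w) h
  rw [← hpe]; exact weight_pos hw hij p

lemma wdist_symm (i j : V) : wdist G w i j = wdist G w j i := by
  unfold wdist
  congr 1
  ext x
  constructor
  · rintro ⟨p, hp, rfl⟩
    exact ⟨p.reverse, hp.reverse, weight_reverse p⟩
  · rintro ⟨p, hp, rfl⟩
    exact ⟨p.reverse, hp.reverse, weight_reverse p⟩

lemma weight_take_add_drop {i j : V} (p : G.Walk i j) {u : V} (hu : u ∈ p.support) :
    walkWeight G w (p.takeUntil u hu) + walkWeight G w (p.dropUntil u hu)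
      = walkWeight G w p := by
  conv_rhs => rw [← p.take_spec hu]
  rw [weight_append]

lemma wdist_le_walk (hw : PosWeights G w) : ∀ {i j : V} (p : G.Walk i j),
    wdist G w i j ≤ walkWeight G w p := by
  intro i j p
  induction p with
  | nil => exact wdist_le_path Walk.nil Walk.IsPath.nil
  | @cons a c b h q ih =>
    have hwe : 0 ≤ w s(a, c) := (hw _ h).le
    have key : wdist G w a b ≤ w s(a, c) + wdist G w c b := by
      obtain ⟨r, hr, hre⟩ := exists_realizes (w := w) (Reachable.mono le_rfl ⟨q⟩)
      by_cases ha : a ∈ r.support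
      · have h1 : wdist G w a b ≤ walkWeight G w (r.dropUntil a ha) :=
          wdist_le_path _ (hr.dropUntil ha)
        have h2 : walkWeight G w (r.dropUntil a ha) ≤ walkWeight G w r := by
          have := weight_take_add_drop (w := w) r ha
          have h3 := weight_nonneg hw (r.takeUntil a ha)
          linarith
        rw [← hre]
        linarith
      · have hp : (Walk.cons h r).IsPath := hr.cons ha
        have h1 : wdist G w a b ≤ walkWeight G w (Walk.cons h r) := wdist_le_path _ hp
        simp only [walkWeight, Walk.edges_cons, List.map_cons, List.sum_cons] at h1
        rw [← hre]
        exact h1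
    have hq : wdist G w c b ≤ walkWeight G w q := ih
    simp only [walkWeight, Walk.edges_cons, List.map_cons, List.sum_cons]
    calc wdist G w a b ≤ w s(a, c) + wdist G w c b := key
      _ ≤ w s(a, c) + (q.edges.map w).sum := by
          have : walkWeight G w q = (q.edges.map w).sum := rfl
          linarith [this ▸ hq]

lemma wdist_triangle (hw : PosWeights G w) {i k : V} (j : V) (h1 : G.Reachable i j)
    (h2 : G.Reachable j k) : wdist G w i k ≤ wdist G w i j + wdist G w j k := by
  obtain ⟨p, hp, hpe⟩ := exists_realizes (w := w) h1
  obtain ⟨q, hq, hqe⟩ := exists_realizes (w := w) h2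
  calc wdist G w i k ≤ walkWeight G w (p.append q) := wdist_le_walk hw _
    _ = wdist G w i j + wdist G w j k := by rw [weight_append, hpe, hqe]

lemma weight_bypass_le (hw : PosWeights G w) {i j : V} (p : G.Walk i j) :
    walkWeight G w p.bypass ≤ walkWeight G w p := by
  induction p with
  | nil => simp [Walk.bypass]
  | @cons a c b h q ih =>
    simp only [Walk.bypass]
    split_ifs with hs
    · have h2 : walkWeight G w (q.bypass.dropUntil a hs) ≤ walkWeight G w q.bypass := by
        have := weight_take_add_drop (w := w) q.bypass hs
        have h3 := weight_nonneg hw (q.bypass.takeUntil a hs)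
        linarith
      have h4 : 0 ≤ w s(a, c) := (hw _ h).le
      simp only [walkWeight, Walk.edges_cons, List.map_cons, List.sum_cons]
      have h5 : walkWeight G w q.bypass ≤ walkWeight G w q := ih
      simp only [walkWeight] at h2 h5
      linarith
    · simp only [walkWeight, Walk.edges_cons, List.map_cons, List.sum_cons]
      have h5 : walkWeight G w q.bypass ≤ walkWeight G w q := ih
      simp only [walkWeight] at h5
      linarith

end Basics
section Core
variable [Fintype V] [DecidableEq V] {G : SimpleGraph V} [DecidableRel G.Adj] {w : Sym2 V → ℝ}

-- v in the (strict) drop part means v not in the take part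
lemma not_mem_takeUntil {a b u v : V} {p : G.Walk a b} (hp : p.IsPath) (hu : u ∈ p.support)
    (hv : v ∈ (p.dropUntil u hu).support) (hvu : v ≠ u) :
    v ∉ (p.takeUntil u hu).support := by
  have hnd : p.support.Nodup := hp.support_nodup
  have hsp : p.support = (p.takeUntil u hu).support ++ (p.dropUntil u hu).support.tail := by
    conv_lhs => rw [← p.take_spec hu]
    rw [Walk.support_append]
  rw [hsp] at hnd
  have hdisj := List.disjoint_of_nodup_append hnd
  have hv' : v ∈ (p.dropUntil u hu).support.tail := by
    have := (p.dropUntil u hu).support_eq_cons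
    rw [this] at hv
    rcases List.mem_cons.mp hv with h | h
    · exact absurd h hvu
    · exact h
  exact fun hmem => hdisj hmem hv'

lemma start_not_mem_dropUntil_dropUntil {a b u v : V} {p : G.Walk a b} (hp : p.IsPath)
    (hu : u ∈ p.support) (hv : v ∈ (p.dropUntil u hu).support) (huv : u ≠ v) :
    u ∉ ((p.dropUntil u hu).dropUntil v hv).support := by
  intro hmem
  have hd : (p.dropUntil u hu).IsPath := hp.dropUntil hu
  exact (not_mem_takeUntil hd hv hmem huv) (((p.dropUntil u hu).takeUntil v hv).start_mem_support)

-- ordering: one of u,v comes after the other on a walk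
lemma mem_dropUntil_or {a b : V} (p : G.Walk a b) {u v : V} (hu : u ∈ p.support)
    (hv : v ∈ p.support) :
    v ∈ (p.dropUntil u hu).support ∨ u ∈ (p.dropUntil v hv).support := by
  induction p with
  | nil =>
    left
    simp only [Walk.mem_support_nil_iff] at hu hv
    subst hu; subst hv
    exact Walk.start_mem_support _
  | @cons a c b h q ih =>
    by_cases hau : a = u
    · subst hau
      left
      have : (Walk.cons h q).dropUntil a hu = Walk.cons h q := by
        simp [Walk.dropUntil]
      rw [this]
      exact hv
    · by_cases hav : a = v
      · subst hav
        right
        have : (Walk.cons h q).dropUntil a hv = Walk.cons h q := by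
          simp [Walk.dropUntil]
        rw [this]
        exact hu
      · have hu' : u ∈ q.support := by
          rcases List.mem_cons.mp ((Walk.support_cons h q) ▸ hu) with h' | h'
          · exact absurd h'.symm hau
          · exact h'
        have hv' : v ∈ q.support := by
          rcases List.mem_cons.mp ((Walk.support_cons h q) ▸ hv) with h' | h'
          · exact absurd h'.symm hav
          · exact h'
        have e1 : (Walk.cons h q).dropUntil u hu = q.dropUntil u hu' := by
          simp [Walk.dropUntil, hau]
        have e2 : (Walk.cons h q).dropUntil v hv = q.dropUntil v hv' := by
          simp [Walk.dropUntil, hav]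
        rw [e1, e2]
        exact ih hu' hv'

lemma adj_of_indec (hw : PosWeights G w) (hconn : G.Connected) {x y : V}
    (h : Indec G w x y) (hxy : x ≠ y) : G.Adj x y := by
  obtain ⟨p, hp, hpe⟩ := exists_realizes (w := w) (hconn.preconnected x y)
  have hsupp : ∀ z ∈ p.support, z = x ∨ z = y := by
    intro z hz
    by_contra hcon
    push_neg at hcon
    obtain ⟨hzx, hzy⟩ := hcon
    have h1 : wdist G w x z ≤ walkWeight G w (p.takeUntil z hz) :=
      wdist_le_path _ (hp.takeUntil hz)
    have h2 : wdist G w z y ≤ walkWeight G w (p.dropUntil z hz) :=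
      wdist_le_path _ (hp.dropUntil hz)
    have h3 := weight_take_add_drop (w := w) p hz
    have h4 := h z hzx hzy
    linarith
  cases p with
  | nil => exact absurd rfl hxy
  | @cons _ c _ ha q =>
    have hc : c ∈ (Walk.cons ha q).support := by
      rw [Walk.support_cons]
      exact List.mem_cons_of_mem _ q.start_mem_support
    rcases hsupp c hc with h' | h'
    · exfalso
      rw [Walk.cons_isPath_iff] at hp
      exact hp.2 (h' ▸ q.start_mem_support)
    · exact h' ▸ ha

end Core
section Surgery
variable [Fintype V] [DecidableEq V] {G : SimpleGraph V} [DecidableRel G.Adj] {w : Sym2 V → ℝ}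

lemma surgery (hw : PosWeights G w) (hconn : G.Connected) {a b u v z : V}
    (p : G.Walk a b) (hp : Realizes G w p)
    (hu : u ∈ p.support) (hv : v ∈ (p.dropUntil u hu).support)
    (huv : G.Adj u v) (hz : wdist G w u z + wdist G w z v ≤ wdist G w u v)
    (hzu : z ≠ u) (hzv : z ≠ v) :
    ∃ q : G.Walk a b, Realizes G w q ∧ s(u, v) ∉ q.edges := by
  obtain ⟨hpath, hweq⟩ := hp
  set dr := p.dropUntil u hu with hdr
  set ta := p.takeUntil u hu with hta
  set pm := dr.takeUntil v hv with hpm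
  set db := dr.dropUntil v hv with hdb
  obtain ⟨q1, hq1, hq1e⟩ := exists_realizes (w := w) (hconn.preconnected u z)
  obtain ⟨q2, hq2, hq2e⟩ := exists_realizes (w := w) (hconn.preconnected z v)
  set W : G.Walk a b := ta.append ((q1.append q2).append db) with hW
  -- weight computations
  have hwtd : walkWeight G w ta + walkWeight G w dr = walkWeight G w p :=
    weight_take_add_drop p hu
  have hwtd2 : walkWeight G w pm + walkWeight G w db = walkWeight G w dr :=
    weight_take_add_drop dr hv
  have hpmpath : pm.IsPath := (hpath.dropUntil hu).takeUntil hv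
  have hpmw : wdist G w u v ≤ walkWeight G w pm := wdist_le_path _ hpmpath
  have hWw : walkWeight G w W =
      walkWeight G w ta + (walkWeight G w q1 + walkWeight G w q2) + walkWeight G w db := by
    rw [hW, weight_append, weight_append, weight_append]
    ring
  have hWle : walkWeight G w W ≤ wdist G w a b := by
    rw [hWw, hq1e, hq2e, ← hweq]
    linarith
  have hWge : wdist G w a b ≤ walkWeight G w W := wdist_le_walk hw W
  set Q := W.bypass with hQ
  have hQpath : Q.IsPath := W.bypass_isPath
  have hQw : walkWeight G w Q = wdist G w a b := by
    have h1 : walkWeight G w Q ≤ walkWeight G w W := weight_bypass_le hw W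
    have h2 : wdist G w a b ≤ walkWeight G w Q := wdist_le_path _ hQpath
    linarith
  refine ⟨Q, ⟨hQpath, hQw⟩, ?_⟩
  -- now show the edge is not in Q
  have hvu : v ≠ u := huv.ne'
  intro hmem
  have hmemW : s(u, v) ∈ W.edges := W.edges_bypass_subset hmem
  rw [hW] at hmemW
  rw [Walk.edges_append, Walk.edges_append, Walk.edges_append] at hmemW
  simp only [List.mem_append] at hmemW
  have hne_ta : s(u, v) ∉ ta.edges := by
    intro h
    have hvta : v ∈ ta.support := by
      rw [Sym2.eq_swap] at h
      exact ta.fst_mem_support_of_mem_edges h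
    exact not_mem_takeUntil hpath hu hv hvu hvta
  have hne_db : s(u, v) ∉ db.edges := by
    intro h
    have huin : u ∈ db.support := db.fst_mem_support_of_mem_edges h
    exact start_not_mem_dropUntil_dropUntil hpath hu hv huv.ne huin
  have hne_q1 : s(u, v) ∉ q1.edges := by
    intro h
    have hvq : v ∈ q1.support := by
      rw [Sym2.eq_swap] at h
      exact q1.fst_mem_support_of_mem_edges h
    have h1 : wdist G w u v ≤ walkWeight G w (q1.takeUntil v hvq) :=
      wdist_le_path _ (hq1.takeUntil hvq)
    have h2 : wdist G w v z ≤ walkWeight G w (q1.dropUntil v hvq) :=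
      wdist_le_path _ (hq1.dropUntil hvq)
    have h3 := weight_take_add_drop (w := w) q1 hvq
    have h4 : wdist G w z v = wdist G w v z := wdist_symm _ _
    have h5 : 0 < wdist G w v z :=
      wdist_pos hw (hconn.preconnected v z) (Ne.symm hzv)
    rw [hq1e] at h3
    linarith
  have hne_q2 : s(u, v) ∉ q2.edges := by
    intro h
    have huq : u ∈ q2.support := q2.fst_mem_support_of_mem_edges h
    have h1 : wdist G w z u ≤ walkWeight G w (q2.takeUntil u huq) :=
      wdist_le_path _ (hq2.takeUntil huq)
    have h2 : wdist G w u v ≤ walkWeight G w (q2.dropUntil u huq) :=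
      wdist_le_path _ (hq2.dropUntil huq)
    have h3 := weight_take_add_drop (w := w) q2 huq
    have h4 : wdist G w u z = wdist G w z u := wdist_symm _ _
    have h5 : 0 < wdist G w u z :=
      wdist_pos hw (hconn.preconnected u z) (Ne.symm hzu)
    rw [hq2e] at h3
    linarith
  tauto

lemma indec_of_adj (hw : PosWeights G w) (hconn : G.Connected) (hpruned : Pruned G w)
    {u v : V} (huv : G.Adj u v) : Indec G w u v := by
  intro z hzu hzv
  by_contra hcon
  push_neg at hcon
  obtain ⟨a, b, hab, huse⟩ := hpruned s(u, v) huv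
  obtain ⟨p, hp⟩ := exists_realizes (w := w) (hconn.preconnected a b)
  have hmem : s(u, v) ∈ p.edges := huse p hp
  have hu : u ∈ p.support := p.fst_mem_support_of_mem_edges hmem
  have hv : v ∈ p.support := p.snd_mem_support_of_mem_edges hmem
  rcases mem_dropUntil_or p hu hv with hcase | hcase
  · obtain ⟨q, hq, hqe⟩ := surgery hw hconn p hp hu hcase huv hcon hzu hzv
    exact hqe (huse q hq)
  · have hz' : wdist G w v z + wdist G w z u ≤ wdist G w v u := by
      rw [wdist_symm v z, wdist_symm z u, wdist_symm v u]
      linarith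
    obtain ⟨q, hq, hqe⟩ := surgery hw hconn p hp hv hcase huv.symm hz' hzv hzu
    refine hqe ?_
    rw [Sym2.eq_swap]
    exact huse q hq
  end Surgery
section Assembly
variable [Fintype V] [DecidableEq V] {G : SimpleGraph V} [DecidableRel G.Adj] {w : Sym2 V → ℝ}

def intList {x y : V} (p : G.Walk x y) : List V := p.support.tail.dropLast

lemma support_eq_intList {x y : V} (p : G.Walk x y) (hxy : x ≠ y) :
    p.support = x :: (intList p ++ [y]) := by
  cases p with
  | nil => exact absurd rfl hxy
  | @cons _ c _ h q =>
    have hne : q.support ≠ [] := q.support_ne_nil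
    have hd := List.dropLast_append_getLast hne
    rw [q.getLast_support] at hd
    rw [Walk.support_cons]
    congr 1
    rw [intList, Walk.support_cons, List.tail_cons]
    exact hd.symm

lemma intList_spec {x y : V} {p : G.Walk x y} (hp : p.IsPath) (hxy : x ≠ y) :
    ∀ v ∈ intList p, v ∈ p.support ∧ v ≠ x ∧ v ≠ y := by
  intro v hv
  have hnd : p.support.Nodup := hp.support_nodup
  have hsupp := support_eq_intList p hxy
  rw [hsupp] at hnd
  have hx : x ∉ intList p ++ [y] := (List.nodup_cons.mp hnd).1
  have hnd2 : (intList p ++ [y]).Nodup := (List.nodup_cons.mp hnd).2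
  have hy : y ∉ intList p := by
    intro h
    have := List.disjoint_of_nodup_append hnd2
    exact this h (List.mem_singleton_self y)
  refine ⟨?_, ?_, ?_⟩
  · rw [hsupp]
    exact List.mem_cons_of_mem _ (List.mem_append_left _ hv)
  · intro h; subst h; exact hx (List.mem_append_left _ hv)
  · intro h; subst h; exact hy hv

lemma chain_indec_of_path (hw : PosWeights G w) (hconn : G.Connected)
    (hpruned : Pruned G w) {x y : V} (p : G.Walk x y) (hxy : x ≠ y) :
    List.Chain' (Indec G w) (x :: (intList p ++ [y])) := by
  have h := p.isChain_adj_support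
  rw [support_eq_intList p hxy] at h
  exact h.imp fun a b hab => indec_of_adj hw hconn hpruned hab

lemma walk_of_chain : ∀ (l : List V) (x y : V),
    List.Chain (fun a b => a = b ∨ G.Adj a b) x (l ++ [y]) →
    ∃ p : G.Walk x y, ∀ v ∈ p.support, v = x ∨ v ∈ l ∨ v = y := by
  intro l
  induction l with
  | nil =>
    intro x y hc
    rcases (List.chain_cons.mp hc).1 with h | h
    · subst h
      exact ⟨Walk.nil, by simp⟩
    · refine ⟨Walk.cons h Walk.nil, ?_⟩
      intro v hv
      simp only [Walk.support_cons, Walk.support_nil, List.mem_cons, List.mem_singleton] at hv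
      rcases hv with h | h | h
      · exact Or.inl h
      · exact Or.inr (Or.inr h)
      · simp at h
  | cons z l' ih =>
    intro x y hc
    rw [List.cons_append] at hc
    obtain ⟨hxz, hc'⟩ := List.chain_cons.mp hc
    obtain ⟨p', hp'⟩ := ih z y hc'
    rcases hxz with h | h
    · subst h
      refine ⟨p', fun v hv => ?_⟩
      rcases hp' v hv with h | h | h
      · exact Or.inl h
      · exact Or.inr (Or.inl (List.mem_cons_of_mem _ h))
      · exact Or.inr (Or.inr h)
    · refine ⟨Walk.cons h p', fun v hv => ?_⟩
      rw [Walk.support_cons] at hv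
      rcases List.mem_cons.mp hv with h' | h'
      · exact Or.inl h'
      · rcases hp' v h' with h'' | h'' | h''
        · subst h''; exact Or.inr (Or.inl (List.mem_cons_self))
        · exact Or.inr (Or.inl (List.mem_cons_of_mem _ h''))
        · exact Or.inr (Or.inr h'')

end Assembly

/-- A pruned positive-weighted graph contains a subdivision of `K₃,₃` iff there are disjoint
3-element sets `A`, `B` of vertices such that each pair `(a, b) ∈ A × B` is joined by a
(possibly empty) sequence of vertices outside `A ∪ B` with all consecutive 2-weights
indecomposable, the sequences attached to distinct pairs being disjoint. -/
theorem stmt_16 {n : ℕ} (G : SimpleGraph (Fin n)) (hconn : G.Connected)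
    (w : Sym2 (Fin n) → ℝ) (hw : PosWeights G w) (hpruned : Pruned G w) :
    ContainsSubdivisionK33 G ↔
      ∃ A B : Finset (Fin n), A.card = 3 ∧ B.card = 3 ∧ Disjoint A B ∧
        ∃ c : Fin n → Fin n → List (Fin n),
          (∀ a ∈ A, ∀ b ∈ B,
            ((Indec G w a b ∧ c a b = []) ∨
              (c a b ≠ [] ∧ (∀ v ∈ c a b, v ∉ A ∧ v ∉ B) ∧
                List.Chain' (Indec G w) (a :: (c a b ++ [b]))))) ∧
          (∀ a ∈ A, ∀ b ∈ B, ∀ a' ∈ A, ∀ b' ∈ B, (a ≠ a' ∨ b ≠ b') →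
            ∀ v ∈ c a b, v ∉ c a' b') := by
    classical
  constructor
  · rintro ⟨f, g, hf, hg, hfg, P, hPpath, hPint, hPdis⟩
    set c : Fin n → Fin n → List (Fin n) := fun a b =>
      if h : ∃ ij : Fin 3 × Fin 3, f ij.1 = a ∧ g ij.2 = b then
        intList (P h.choose.1 h.choose.2) else [] with hcdef
    have hc : ∀ i j, c (f i) (g j) = intList (P i j) := by
      intro i j
      have hex : ∃ ij : Fin 3 × Fin 3, f ij.1 = f i ∧ g ij.2 = g j := ⟨(i, j), rfl, rfl⟩
      rw [hcdef]
      simp only [dif_pos hex]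
      obtain ⟨h1, h2⟩ := hex.choose_spec
      rw [hf h1, hg h2]
    refine ⟨Finset.image f Finset.univ, Finset.image g Finset.univ, ?_, ?_, ?_, c, ?_, ?_⟩
    · rw [Finset.card_image_of_injective _ hf]; simp
    · rw [Finset.card_image_of_injective _ hg]; simp
    · rw [Finset.disjoint_left]
      rintro a ha hb
      simp only [Finset.mem_image, Finset.mem_univ, true_and] at ha hb
      obtain ⟨i, rfl⟩ := ha
      obtain ⟨j, hj⟩ := hb
      exact hfg i j hj.symm
    · rintro a ha b hb
      simp only [Finset.mem_image, Finset.mem_univ, true_and] at ha hb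
      obtain ⟨i, rfl⟩ := ha
      obtain ⟨j, rfl⟩ := hb
      have hab : f i ≠ g j := hfg i j
      have hCH := chain_indec_of_path hw hconn hpruned (P i j) hab
      by_cases hnil : intList (P i j) = []
      · left
        refine ⟨?_, by rw [hc]; exact hnil⟩
        rw [hnil, List.nil_append] at hCH
        exact List.isChain_pair.mp hCH
      · right
        refine ⟨by rw [hc]; exact hnil, ?_, by rw [hc]; exact hCH⟩
        intro v hv
        rw [hc] at hv
        have hsp := intList_spec (hPpath i j) hab v hv
        have hout := hPint i j v ⟨hsp.1, hsp.2.1, hsp.2.2⟩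
        simp only [Set.mem_union, Set.mem_range, not_or, not_exists] at hout
        constructor
        · intro hmem
          simp only [Finset.mem_image, Finset.mem_univ, true_and] at hmem
          obtain ⟨i', hi'⟩ := hmem
          exact hout.1 i' hi'
        · intro hmem
          simp only [Finset.mem_image, Finset.mem_univ, true_and] at hmem
          obtain ⟨j', hj'⟩ := hmem
          exact hout.2 j' hj'
    · rintro a ha b hb a' ha' b' hb' hne v hv hv'
      simp only [Finset.mem_image, Finset.mem_univ, true_and] at ha hb ha' hb'
      obtain ⟨i, rfl⟩ := ha
      obtain ⟨j, rfl⟩ := hb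
      obtain ⟨i', rfl⟩ := ha'
      obtain ⟨j', rfl⟩ := hb'
      rw [hc] at hv hv'
      have hne' : i ≠ i' ∨ j ≠ j' := by
        rcases hne with h | h
        · exact Or.inl fun hh => h (hh ▸ rfl)
        · exact Or.inr fun hh => h (hh ▸ rfl)
      have hsp := intList_spec (hPpath i j) (hfg i j) v hv
      have hsp' := intList_spec (hPpath i' j') (hfg i' j') v hv'
      exact hPdis i j i' j' hne' v ⟨hsp.1, hsp.2.1, hsp.2.2⟩ hsp'.1
  · rintro ⟨A, B, hA3, hB3, hAB, c, hchain, hdisj⟩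
    let f : Fin 3 → Fin n := fun i => ((A.orderIsoOfFin hA3) i : Fin n)
    let g : Fin 3 → Fin n := fun j => ((B.orderIsoOfFin hB3) j : Fin n)
    have hfA : ∀ i, f i ∈ A := fun i => ((A.orderIsoOfFin hA3) i).2
    have hgB : ∀ j, g j ∈ B := fun j => ((B.orderIsoOfFin hB3) j).2
    have hf : Function.Injective f :=
      fun i i' h => (A.orderIsoOfFin hA3).injective (Subtype.ext h)
    have hg : Function.Injective g :=
      fun j j' h => (B.orderIsoOfFin hB3).injective (Subtype.ext h)
    have hfg : ∀ i j, f i ≠ g j := fun i j h =>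
      Finset.disjoint_left.mp hAB (hfA i) (h ▸ hgB j)
    have hmemC : ∀ a ∈ A, ∀ b ∈ B, ∀ v ∈ c a b, v ∉ A ∧ v ∉ B := by
      intro a ha b hb v hv
      rcases hchain a ha b hb with ⟨_, h0⟩ | ⟨_, h1, _⟩
      · rw [h0] at hv; simp at hv
      · exact h1 v hv
    have hCH : ∀ a ∈ A, ∀ b ∈ B, List.Chain' (Indec G w) (a :: (c a b ++ [b])) := by
      intro a ha b hb
      rcases hchain a ha b hb with ⟨hi, h0⟩ | ⟨_, _, h2⟩
      · rw [h0, List.nil_append]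
        exact List.isChain_pair.mpr hi
      · exact h2
    have key : ∀ i j : Fin 3, ∃ p : G.Walk (f i) (g j), p.IsPath ∧
        ∀ x ∈ p.support, x = f i ∨ x ∈ c (f i) (g j) ∨ x = g j := by
      intro i j
      have hch := hCH (f i) (hfA i) (g j) (hgB j)
      have hch1 : List.Chain (Indec G w) (f i) (c (f i) (g j) ++ [g j]) := hch
      have hch2 : List.Chain (fun x y => x = y ∨ G.Adj x y) (f i) (c (f i) (g j) ++ [g j]) :=
        List.Chain.imp (fun x y h =>
          if hxy : x = y then Or.inl hxy
          else Or.inr (adj_of_indec hw hconn h hxy)) hch1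
      obtain ⟨p₀, hp₀⟩ := walk_of_chain _ _ _ hch2
      exact ⟨p₀.bypass, p₀.bypass_isPath, fun x hx => hp₀ x (p₀.support_bypass_subset hx)⟩
    choose P hP1 hP2 using key
    have hint : ∀ i j : Fin 3, ∀ x ∈ interiorSet (P i j), x ∈ c (f i) (g j) := by
      intro i j x hx
      obtain ⟨hxs, hxa, hxb⟩ := hx
      rcases hP2 i j x hxs with h | h | h
      · exact absurd h hxa
      · exact h
      · exact absurd h hxb
    refine ⟨f, g, hf, hg, hfg, P, hP1, ?_, ?_⟩
    · intro i j x hx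
      have hxc := hint i j x hx
      have hnm := hmemC (f i) (hfA i) (g j) (hgB j) x hxc
      simp only [Set.mem_union, Set.mem_range, not_or, not_exists]
      constructor
      · intro i' hi'; exact hnm.1 (hi' ▸ hfA i')
      · intro j' hj'; exact hnm.2 (hj' ▸ hgB j')
    · intro i j i' j' hne x hx hx'
      have hxc := hint i j x hx
      have hnm := hmemC (f i) (hfA i) (g j) (hgB j) x hxc
      have hne' : f i ≠ f i' ∨ g j ≠ g j' := by
        rcases hne with h | h
        · exact Or.inl fun hh => h (hf hh)
        · exact Or.inr fun hh => h (hg hh)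
      have hnd := hdisj (f i) (hfA i) (g j) (hgB j) (f i') (hfA i') (g j') (hgB j') hne' x hxc
      rcases hP2 i' j' x hx' with h | h | h
      · exact hnm.1 (h ▸ hfA i')
      · exact hnd h
      · exact hnm.2 (h ▸ hgB j')
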